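/- For all natural numbers k ≥ 2, d ≥ 1 and n ≥ 1, set N := 2^(n^(k-1)) and V_k := [2d] × [N] equipped with the lexicographic linear order. There exists a relation R ⊆ [n]^(k-1) × V_k with the following property: for every interval J of the linear order V_k with |J| ≥ 2N − 1 (i.e., |J| ≥ |V_k|/d − 1) and every subset S ⊆ [n]^(k-1), there exists c ∈ J such that { x ∈ [n]^(k-1) : (x, c) ∈ R } = S. In other words, the family of sections { R(·, c) : c ∈ J } shatters [n]^(k-1) (and hence has cardinality 2^(n^(k-1))). -/

import Mathlib

/-!
Statement 11: For `k ≥ 2`, `d ≥ 1`, `n ≥ 1`, set `N := 2^(n^(k-1))` and let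
`V_k := [2d] × [N]` with the lexicographic order. There is a relation
`R ⊆ [n]^(k-1) × V_k` such that for every interval (order-connected subset) `J`
of `V_k` with `|J| ≥ 2N − 1` and every `S ⊆ [n]^(k-1)` there is `c ∈ J` with
`{x : (x, c) ∈ R} = S`; i.e. the sections `{R(·, c) : c ∈ J}` shatter
`[n]^(k-1)`.
-/

theorem statement11 (k d n : ℕ) (hk : 2 ≤ k) (hd : 1 ≤ d) (hn : 1 ≤ n) :
    ∃ R : Set ((Fin (k - 1) → Fin n) × Lex (Fin (2 * d) × Fin (2 ^ n ^ (k - 1)))),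
      ∀ J : Set (Lex (Fin (2 * d) × Fin (2 ^ n ^ (k - 1)))),
        J.OrdConnected → 2 * 2 ^ n ^ (k - 1) - 1 ≤ J.ncard →
          ∀ S : Set (Fin (k - 1) → Fin n),
            ∃ c ∈ J, {x | (x, c) ∈ R} = S := by
  classical
  set N : ℕ := 2 ^ n ^ (k - 1) with hNdef
  have hN1 : 1 ≤ N := Nat.one_le_two_pow
  have hcard : Fintype.card (Fin N) = Fintype.card (Set (Fin (k - 1) → Fin n)) := by
    rw [Fintype.card_set, Fintype.card_fin, Fintype.card_fun, Fintype.card_fin,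
      Fintype.card_fin]
  let e : Fin N ≃ Set (Fin (k - 1) → Fin n) := Fintype.equivOfCardEq hcard
  refine ⟨{p | p.1 ∈ e (ofLex p.2).2}, ?_⟩
  intro J hJc hJcard S
  -- index map
  let ι : Lex (Fin (2 * d) × Fin N) → ℕ := fun c => N * ((ofLex c).1 : ℕ) + ((ofLex c).2 : ℕ)
  have key : ∀ a1 b1 a2 b2 : ℕ, a2 < N → b2 < N →
      (N * a1 + a2 ≤ N * b1 + b2 ↔ (a1 < b1 ∨ (a1 = b1 ∧ a2 ≤ b2))) := by
    intro a1 b1 a2 b2 h2 h2'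
    constructor
    · intro h
      rcases lt_trichotomy a1 b1 with h1 | h1 | h1
      · exact Or.inl h1
      · exact Or.inr ⟨h1, by subst h1; omega⟩
      · exfalso
        have h3 : N * (b1 + 1) ≤ N * a1 := Nat.mul_le_mul_left N h1
        rw [Nat.mul_add, Nat.mul_one] at h3
        omega
    · rintro (h | ⟨h, h'⟩)
      · have h3 : N * (a1 + 1) ≤ N * b1 := Nat.mul_le_mul_left N h
        rw [Nat.mul_add, Nat.mul_one] at h3
        omega
      · subst h; omega
  have hmono : ∀ a b : Lex (Fin (2 * d) × Fin N), a ≤ b ↔ ι a ≤ ι b := by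
    intro a b
    have : a ≤ b ↔ (ofLex a).1 < (ofLex b).1 ∨
        ((ofLex a).1 = (ofLex b).1 ∧ (ofLex a).2 ≤ (ofLex b).2) := Prod.Lex.le_iff
    rw [this, key _ _ _ _ ((ofLex a).2.isLt) ((ofLex b).2.isLt)]
    simp only [Fin.lt_def, Fin.le_def, Fin.ext_iff]
  have hι_inj : Function.Injective ι := by
    intro a b hab
    exact le_antisymm ((hmono a b).2 hab.le) ((hmono b a).2 hab.ge)
  -- J is nonempty
  have hJne : J.Nonempty := by
    rw [← Set.ncard_pos (Set.toFinite J)]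
    omega
  have hJfin : J.Finite := Set.toFinite J
  -- min and max of J
  obtain ⟨lo, hlo, hlo_min⟩ : ∃ a ∈ J, ∀ a' ∈ J, id a' ≤ id a → id a = id a' := by
    obtain ⟨a, ha, hm⟩ := Set.Finite.exists_minimalFor id J hJfin hJne
    exact ⟨a, ha, fun x hx h => le_antisymm (hm hx h) h⟩
  obtain ⟨hi, hhi, hhi_max⟩ : ∃ a ∈ J, ∀ a' ∈ J, id a ≤ id a' → id a = id a' := by
    obtain ⟨a, ha, hm⟩ := Set.Finite.exists_maximalFor id J hJfin hJne
    exact ⟨a, ha, fun x hx h => le_antisymm h (hm hx h)⟩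
  have hlo_le : ∀ x ∈ J, lo ≤ x := by
    intro x hx
    rcases le_total lo x with h | h
    · exact h
    · exact le_of_eq (hlo_min x hx h)
  have hhi_ge : ∀ x ∈ J, x ≤ hi := by
    intro x hx
    rcases le_total x hi with h | h
    · exact h
    · exact ge_of_eq (hhi_max x hx h)
  -- J ⊆ Icc lo hi, so ncard J ≤ ι hi + 1 - ι lo
  have hJIcc : ι '' J ⊆ Set.Icc (ι lo) (ι hi) := by
    rintro _ ⟨x, hx, rfl⟩
    exact ⟨(hmono lo x).1 (hlo_le x hx), (hmono x hi).1 (hhi_ge x hx)⟩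
  have hcard_le : J.ncard ≤ ι hi + 1 - ι lo := by
    have h1 : J.ncard = (ι '' J).ncard := (Set.ncard_image_of_injective J hι_inj).symm
    have h2 : (ι '' J).ncard ≤ (Set.Icc (ι lo) (ι hi)).ncard :=
      Set.ncard_le_ncard hJIcc (Set.finite_Icc _ _)
    have h3 : (Set.Icc (ι lo) (ι hi)).ncard = ι hi + 1 - ι lo := by
      rw [← Finset.coe_Icc, Set.ncard_coe_finset, Nat.card_Icc]
    omega
  have hlohi : ι lo ≤ ι hi := (hmono lo hi).1 (hlo_le hi hhi)
  have hspan : ι lo + 2 * N - 2 ≤ ι hi := by omega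
  -- the target second coordinate
  set j : Fin N := e.symm S with hj
  set a : ℕ := ((ofLex lo).1 : ℕ) with ha
  set b : ℕ := ((ofLex lo).2 : ℕ) with hb
  have hbN : b < N := (ofLex lo).2.isLt
  have hjN : (j : ℕ) < N := j.isLt
  set v : ℕ := if b ≤ (j : ℕ) then N * a + (j : ℕ) else N * (a + 1) + (j : ℕ) with hv
  have hιlo : ι lo = N * a + b := rfl
  have hv_lo : ι lo ≤ v := by
    rw [hιlo, hv]
    split
    · omega
    · rw [Nat.mul_add, Nat.mul_one]; omega
  have hv_hi : v ≤ ι hi := by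
    have : v ≤ ι lo + 2 * N - 2 := by
      rw [hιlo, hv]
      split
      · omega
      · rw [Nat.mul_add, Nat.mul_one]; omega
    omega
  have hv_lt : v < N * (2 * d) := by
    have hhi_lt : ι hi < N * (2 * d) := by
      have h1 : ((ofLex hi).1 : ℕ) + 1 ≤ 2 * d := (ofLex hi).1.isLt
      have h2 : N * (((ofLex hi).1 : ℕ) + 1) ≤ N * (2 * d) := Nat.mul_le_mul_left N h1
      rw [Nat.mul_add, Nat.mul_one] at h2
      have h3 : ι hi < N * ((ofLex hi).1 : ℕ) + N := by
        have := (ofLex hi).2.isLt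
        simp only [ι]
        omega
      omega
    omega
  have hN0 : 0 < N := hN1
  have hvdiv : v / N < 2 * d := by
    rw [Nat.div_lt_iff_lt_mul hN0]
    rw [Nat.mul_comm] at hv_lt
    exact hv_lt
  set c : Lex (Fin (2 * d) × Fin N) := toLex (⟨v / N, hvdiv⟩, j) with hc
  have hιc : ι c = v := by
    have hmod : v % N = (j : ℕ) := by
      rw [hv]
      split <;> simp [Nat.mul_add_mod', Nat.mul_add_mod, Nat.add_mul_mod_self_left,
        Nat.mod_eq_of_lt hjN]
    have := Nat.div_add_mod v N
    simp only [ι, hc, ofLex_toLex]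
    omega
  have hcJ : c ∈ J := hJc.out hlo hhi ⟨(hmono lo c).2 (by omega), (hmono c hi).2 (by omega)⟩
  refine ⟨c, hcJ, ?_⟩
  have : (ofLex c).2 = j := rfl
  ext x
  simp only [Set.mem_setOf_eq, this, hj, Equiv.apply_symm_apply]
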